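/- Let n ≥ 4 be even, let w be a one-dimensional isotropic subspace of (ZMod 2)^{2n} and y a maximal isotropic subspace with w ⊆ y. Then |{x ∈ L^n_n : dim(x∩y) = n/2}| ≥ 2^{n/2} · |{x ∈ L^n_n : w ⊆ x and dim(x∩y) = n/2}|. (Equivalently, with Q the number of ordered pairs of maximal isotropic subspaces intersecting in dimension n/2 and Δ(G_w) the degree of the graph G_w, one has Q/(|L^n_n|·Δ(G_w)) ≥ 2^{n/2}.) -/
import Mathlib


open Finset

abbrev F2 := ZMod 2
/-- `F2^{2n}`, split into the first and last `n` coordinates. -/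
abbrev PV (n : ℕ) := (Fin n → F2) × (Fin n → F2)

/-- Symplectic product on `F2^{2n}`: zero iff `a₁·b₂ = a₂·b₁`. -/
def symp {n : ℕ} (a b : PV n) : F2 :=
  (∑ i, a.1 i * b.2 i) + (∑ i, a.2 i * b.1 i)

/-- A subspace is isotropic if the symplectic product vanishes on it. -/
def IsIsotropic {n : ℕ} (S : Submodule F2 (PV n)) : Prop :=
  ∀ x ∈ S, ∀ y ∈ S, symp x y = 0

/-- `Lset n k` = `L^n_k`, the set of `k`-dimensional isotropic subspaces of `F2^{2n}`. -/
def Lset (n k : ℕ) : Set (Submodule F2 (PV n)) :=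
  {S | IsIsotropic S ∧ Module.finrank F2 S = k}

/-- Integer lift of a vector over `F2`, with values in `{0,1} ⊆ ℤ`. -/
def liftZ {n : ℕ} (v : Fin n → F2) : Fin n → ℤ := fun i => ((v i).val : ℤ)

def dotZ {n : ℕ} (a b : Fin n → ℤ) : ℤ := ∑ i, a i * b i

/-- The phase `i^{x̂₁·x̂₂} · i^{ŷ₁·ŷ₂} · i^{−((x+y)^^₁·(x+y)^^₂)} · (−1)^{x̂₂·ŷ₁}`. -/
noncomputable def phase {n : ℕ} (x y : PV n) : ℂ :=
  Complex.I ^ (dotZ (liftZ x.1) (liftZ x.2)) *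
  Complex.I ^ (dotZ (liftZ y.1) (liftZ y.2)) *
  Complex.I ^ (-(dotZ (liftZ (x + y).1) (liftZ (x + y).2))) *
  (-1 : ℂ) ^ (dotZ (liftZ x.2) (liftZ y.1))

/-- `w(x,y) ∈ {0,1} ⊆ F2`: zero iff the phase equals `1`. -/
noncomputable def wght {n : ℕ} (x y : PV n) : F2 :=
  if phase x y = 1 then 0 else 1

/-- An outcome of an isotropic subspace `S` is `f : S → F2` with
`f(x+y) = f(x)+f(y)+w(x,y)`. -/
def IsOutcome {n : ℕ} (S : Submodule F2 (PV n)) (f : S → F2) : Prop :=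
  ∀ x y : S, f (x + y) = f x + f y + wght (x : PV n) (y : PV n)

/-- Two outcomes are consistent if they agree on the intersection of their domains. -/
def ConsistentOn {n : ℕ} {S₁ S₂ : Submodule F2 (PV n)} (f₁ : S₁ → F2) (f₂ : S₂ → F2) : Prop :=
  ∀ v (h1 : v ∈ S₁) (h2 : v ∈ S₂), f₁ ⟨v, h1⟩ = f₂ ⟨v, h2⟩

lemma F2_add_self (x : F2) : x + x = 0 := CharTwo.add_self_eq_zero x

lemma PV_add_self {n : ℕ} (v : PV n) : v + v = 0 := by
  have h : v + v = (2 : F2) • v := by rw [two_smul]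
  rw [h, show (2 : F2) = 0 from rfl, zero_smul]

lemma symp_add_left {n : ℕ} (a a' b : PV n) : symp (a+a') b = symp a b + symp a' b := by
  simp [symp, add_mul, Finset.sum_add_distrib]; ring

lemma symp_smul_left {n : ℕ} (c : F2) (a b : PV n) : symp (c • a) b = c * symp a b := by
  simp [symp, Finset.mul_sum, mul_add, mul_assoc]

lemma symp_comm {n : ℕ} (a b : PV n) : symp a b = symp b a := by
  simp [symp, mul_comm]; ring

lemma symp_add_right {n : ℕ} (a b b' : PV n) : symp a (b+b') = symp a b + symp a b' := by
  rw [symp_comm, symp_add_left, symp_comm b a, symp_comm b' a]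

lemma symp_smul_right {n : ℕ} (c : F2) (a b : PV n) : symp a (c • b) = c * symp a b := by
  rw [symp_comm, symp_smul_left, symp_comm]

lemma symp_self {n : ℕ} (a : PV n) : symp a a = 0 := by
  have h : ∑ i, a.2 i * a.1 i = ∑ i, a.1 i * a.2 i := by simp [mul_comm]
  rw [symp, h, F2_add_self]

/-- The symplectic map z ↦ z + ⟨z,u⟩d + ⟨z,d⟩u  (requires ⟨u,d⟩ = 0 for good props). -/
def gmap {n : ℕ} (u d : PV n) : PV n →ₗ[F2] PV n where
  toFun z := z + symp z u • d + symp z d • u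
  map_add' a b := by
    simp only [symp_add_left, add_smul]
    abel
  map_smul' c a := by
    simp only [symp_smul_left, RingHom.id_apply, mul_smul, smul_add]

lemma symp_gmap_u {n : ℕ} {u d : PV n} (hud : symp u d = 0) (z : PV n) :
    symp (gmap u d z) u = symp z u := by
  simp [gmap, symp_add_left, symp_smul_left, symp_self, symp_comm d u, hud]

lemma symp_gmap_d {n : ℕ} {u d : PV n} (hud : symp u d = 0) (z : PV n) :
    symp (gmap u d z) d = symp z d := by
  simp [gmap, symp_add_left, symp_smul_left, symp_self, hud]

lemma gmap_invol {n : ℕ} {u d : PV n} (hud : symp u d = 0) (z : PV n) :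
    gmap u d (gmap u d z) = z := by
  have h1 := symp_gmap_u hud z
  have h2 := symp_gmap_d hud z
  show gmap u d z + symp (gmap u d z) u • d + symp (gmap u d z) d • u = z
  rw [h1, h2]
  show (z + symp z u • d + symp z d • u) + symp z u • d + symp z d • u = z
  have hb := PV_add_self (symp z u • d)
  have hc := PV_add_self (symp z d • u)
  abel_nf
  rw [show (2:ℤ) • (symp z u • d) = symp z u • d + symp z u • d from two_zsmul _,
    show (2:ℤ) • (symp z d • u) = symp z d • u + symp z d • u from two_zsmul _, hb, hc]
  abel

lemma gmap_symp {n : ℕ} {u d : PV n} (hud : symp u d = 0) (a b : PV n) :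
    symp (gmap u d a) (gmap u d b) = symp a b := by
  simp only [gmap, LinearMap.coe_mk, AddHom.coe_mk]
  simp only [symp_add_left, symp_add_right, symp_smul_left, symp_smul_right,
    symp_self, symp_comm d u, hud, symp_comm d b, symp_comm u b]
  ring_nf
  rw [show (2:F2) = 0 from rfl]
  ring

lemma F2_eq_one {x : F2} (h : x ≠ 0) : x = 1 := by
  fin_cases x
  · exact absurd rfl h
  · rfl

lemma exists_symp_eq_one {n : ℕ} {v : PV n} (hv : v ≠ 0) : ∃ u, symp u v = 1 := by
  by_cases h1 : v.1 = 0
  · have h2 : v.2 ≠ 0 := fun h2 => hv (Prod.ext h1 h2)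
    obtain ⟨j, hj⟩ := Function.ne_iff.mp h2
    refine ⟨(Pi.single j 1, 0), ?_⟩
    simp [symp, Pi.single_apply, ite_mul, F2_eq_one (by simpa using hj)]
  · obtain ⟨j, hj⟩ := Function.ne_iff.mp h1
    refine ⟨(0, Pi.single j 1), ?_⟩
    simp [symp, Pi.single_apply, ite_mul, F2_eq_one (by simpa using hj)]

lemma exists_symp_one_one {n : ℕ} {v₁ v₂ : PV n} (h1 : v₁ ≠ 0) (h2 : v₂ ≠ 0) :
    ∃ u, symp u v₁ = 1 ∧ symp u v₂ = 1 := by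
  obtain ⟨a, ha⟩ := exists_symp_eq_one h1
  obtain ⟨b, hb⟩ := exists_symp_eq_one h2
  by_cases hab : symp a v₂ = 1
  · exact ⟨a, ha, hab⟩
  by_cases hba : symp b v₁ = 1
  · exact ⟨b, hba, hb⟩
  have hab0 : symp a v₂ = 0 := by
    have := F2_eq_one (x := symp a v₂); tauto
  have hba0 : symp b v₁ = 0 := by
    have := F2_eq_one (x := symp b v₁); tauto
  exact ⟨a + b, by rw [symp_add_left, ha, hba0, add_zero],
    by rw [symp_add_left, hab0, hb, zero_add]⟩

/-- Key transitivity: a symplectic equivalence stabilizing `y` and moving `v₁` to `v₂`. -/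
lemma exists_good_equiv {n : ℕ} {y : Submodule F2 (PV n)} (hy : IsIsotropic y)
    {v₁ v₂ : PV n} (hm1 : v₁ ∈ y) (hm2 : v₂ ∈ y) (h1 : v₁ ≠ 0) (h2 : v₂ ≠ 0) :
    ∃ e : PV n ≃ₗ[F2] PV n, (∀ a b, symp (e a) (e b) = symp a b) ∧
      (∀ z, z ∈ y ↔ e z ∈ y) ∧ e v₁ = v₂ := by
  by_cases hv : v₁ = v₂
  · exact ⟨LinearEquiv.refl F2 (PV n), fun _ _ => rfl, fun _ => Iff.rfl, hv⟩
  set d := v₁ + v₂ with hd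
  have hdy : d ∈ y := y.add_mem hm1 hm2
  obtain ⟨u, hu1, hu2⟩ := exists_symp_one_one h1 h2
  have hud : symp u d = 0 := by rw [hd, symp_add_right, hu1, hu2, F2_add_self]
  refine ⟨LinearEquiv.ofLinear (gmap u d) (gmap u d)
      (LinearMap.ext fun z => gmap_invol hud z) (LinearMap.ext fun z => gmap_invol hud z),
    fun a b => gmap_symp hud a b, ?_, ?_⟩
  · intro z
    constructor
    · intro hz
      show gmap u d z ∈ y
      have hzd : symp z d = 0 := hy z hz d hdy
      show z + symp z u • d + symp z d • u ∈ y
      rw [hzd, zero_smul, add_zero]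
      exact y.add_mem hz (y.smul_mem _ hdy)
    · intro hz
      have hinv : z = gmap u d (gmap u d z) := (gmap_invol hud z).symm
      have hzy : gmap u d z ∈ y := hz
      have hzd : symp (gmap u d z) d = 0 := hy _ hzy d hdy
      rw [hinv]
      show gmap u d z + symp (gmap u d z) u • d + symp (gmap u d z) d • u ∈ y
      rw [hzd, zero_smul, add_zero]
      exact y.add_mem hzy (y.smul_mem _ hdy)
  · show gmap u d v₁ = v₂
    show v₁ + symp v₁ u • d + symp v₁ d • u = v₂
    have e1 : symp v₁ u = 1 := by rw [symp_comm]; exact hu1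
    have e2 : symp v₁ d = 0 := hy v₁ hm1 d hdy
    rw [e1, e2, one_smul, zero_smul, add_zero, hd, ← add_assoc, PV_add_self, zero_add]

open Classical in
noncomputable instance {n : ℕ} : Fintype (Submodule F2 (PV n)) := Fintype.ofFinite _

open Classical in
/-- Invariance of the counted predicate under a symplectic equivalence stabilizing `y`. -/
lemma card_filter_equiv {n m : ℕ} (y : Submodule F2 (PV n)) (e : PV n ≃ₗ[F2] PV n)
    (hsymp : ∀ a b, symp (e a) (e b) = symp a b) (hY : ∀ z, z ∈ y ↔ e z ∈ y) (v : PV n) :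
    (univ.filter fun x : Submodule F2 (PV n) =>
      (x ∈ Lset n n ∧ Module.finrank F2 ↥(x ⊓ y) = m) ∧ v ∈ x).card =
    (univ.filter fun x : Submodule F2 (PV n) =>
      (x ∈ Lset n n ∧ Module.finrank F2 ↥(x ⊓ y) = m) ∧ e v ∈ x).card := by
  have hmapy : Submodule.map (e : PV n →ₗ[F2] PV n) y = y := by
    ext z
    constructor
    · rintro ⟨a, ha, rfl⟩; exact (hY a).1 ha
    · intro hz
      exact ⟨e.symm z, (hY _).2 (by simpa using hz), by simp⟩
  have hpred : ∀ x : Submodule F2 (PV n),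
      ((Submodule.map (e : PV n →ₗ[F2] PV n) x ∈ Lset n n ∧
        Module.finrank F2 ↥(Submodule.map (e : PV n →ₗ[F2] PV n) x ⊓ y) = m) ↔
       (x ∈ Lset n n ∧ Module.finrank F2 ↥(x ⊓ y) = m)) := by
    intro x
    have hrank : Module.finrank F2 ↥(Submodule.map (e : PV n →ₗ[F2] PV n) x) =
        Module.finrank F2 ↥x := LinearEquiv.finrank_map_eq e x
    have hiso : IsIsotropic (Submodule.map (e : PV n →ₗ[F2] PV n) x) ↔ IsIsotropic x := by
      constructor
      · intro h a ha b hb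
        exact (hsymp a b).symm.trans (h (e a) ⟨a, ha, rfl⟩ (e b) ⟨b, hb, rfl⟩)
      · rintro h _ ⟨a, ha, rfl⟩ _ ⟨b, hb, rfl⟩
        exact (hsymp a b).trans (h a ha b hb)
    have hinf : Submodule.map (e : PV n →ₗ[F2] PV n) x ⊓ y =
        Submodule.map (e : PV n →ₗ[F2] PV n) (x ⊓ y) := by
      conv_lhs => rw [← hmapy]
      exact (Submodule.map_inf (e : PV n →ₗ[F2] PV n) e.injective).symm
    rw [hinf]
    have hrank2 : Module.finrank F2 ↥(Submodule.map (e : PV n →ₗ[F2] PV n) (x ⊓ y)) =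
        Module.finrank F2 ↥(x ⊓ y) := LinearEquiv.finrank_map_eq e (x ⊓ y)
    simp only [Lset, Set.mem_setOf_eq, hiso, hrank, hrank2]
  refine Finset.card_bij' (fun x _ => Submodule.map (e : PV n →ₗ[F2] PV n) x)
    (fun x _ => Submodule.map (e.symm : PV n →ₗ[F2] PV n) x) ?_ ?_ ?_ ?_
  · intro x hx
    simp only [mem_filter, mem_univ, true_and] at hx ⊢
    refine ⟨(hpred x).2 hx.1, ?_⟩
    exact ⟨v, hx.2, rfl⟩
  · intro x hx
    simp only [mem_filter, mem_univ, true_and] at hx ⊢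
    have hxx : Submodule.map (e : PV n →ₗ[F2] PV n) (Submodule.map (e.symm : PV n →ₗ[F2] PV n) x) = x := by
      ext z; simp [Submodule.mem_map_equiv]
    constructor
    · rw [← hpred _, hxx]; exact hx.1
    · exact ⟨e v, hx.2, by simp⟩
  · intro x _
    ext z; simp [Submodule.mem_map_equiv]
  · intro x _
    ext z; simp [Submodule.mem_map_equiv]

open Classical in
lemma card_nonzero {n : ℕ} (S : Submodule F2 (PV n)) :
    (univ.filter fun v : PV n => v ∈ S ∧ v ≠ 0).card =
      2 ^ Module.finrank F2 ↥S - 1 := by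
  have h1 : (univ.filter fun v : PV n => v ∈ S).card = 2 ^ Module.finrank F2 ↥S := by
    rw [← Fintype.card_subtype]
    have h := Module.card_eq_pow_finrank (K := F2) (V := ↥S)
    rwa [ZMod.card] at h
  have h2 : (univ.filter fun v : PV n => v ∈ S ∧ v ≠ 0) =
      (univ.filter fun v : PV n => v ∈ S).erase 0 := by
    ext v
    simp only [mem_filter, mem_univ, true_and, mem_erase]
    tauto
  rw [h2, Finset.card_erase_of_mem (by simp [S.zero_mem]), h1]

/-- For even `n ≥ 4`, `w ∈ L^n_1`, and `y ∈ L^n_n` with `w ⊆ y`: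
`|{x ∈ L^n_n : dim(x∩y) = n/2}| ≥ 2^{n/2} · |{x ∈ L^n_n : w ⊆ x, dim(x∩y) = n/2}|`,
i.e. `Q/(|L^n_n|·Δ(G_w)) ≥ 2^{n/2}`. -/
theorem half_distance_degree_ratio :
    ∀ n : ℕ, Even n → 4 ≤ n → ∀ w ∈ Lset n 1, ∀ y ∈ Lset n n, w ≤ y →
      Nat.card {x : Submodule F2 (PV n) |
          x ∈ Lset n n ∧ Module.finrank F2 ↥(x ⊓ y) = n / 2} ≥
        2 ^ (n / 2) *
          Nat.card {x : Submodule F2 (PV n) |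
            x ∈ Lset n n ∧ w ≤ x ∧ Module.finrank F2 ↥(x ⊓ y) = n / 2} := by
  classical
  intro n hev hn4 w hw y hy hwy
  obtain ⟨hyiso, hyrank⟩ := hy
  obtain ⟨hwiso, hwrank⟩ := hw
  set k := n / 2 with hk
  have hkk : k + k = n := by obtain ⟨m, hm⟩ := hev; omega
  have hk2 : 2 ≤ k := by omega
  -- generator of w
  have hwne : w ≠ ⊥ := by
    intro h; rw [h] at hwrank; simp at hwrank
  obtain ⟨w₀, hw₀w, hw₀ne⟩ := Submodule.exists_mem_ne_zero_of_ne_bot hwne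
  have hspan : ∀ x : Submodule F2 (PV n), w ≤ x ↔ w₀ ∈ x := by
    intro x
    constructor
    · exact fun h => h hw₀w
    · intro h
      have hsw : Submodule.span F2 {w₀} = w := by
        apply Submodule.eq_of_le_of_finrank_le
          (by rw [Submodule.span_le, Set.singleton_subset_iff]; exact hw₀w)
        rw [finrank_span_singleton hw₀ne, hwrank]
      rw [← hsw, Submodule.span_le, Set.singleton_subset_iff]
      exact h
  have hw₀y : w₀ ∈ y := hwy hw₀w
  -- finsets
  let AF : Finset (Submodule F2 (PV n)) :=
    univ.filter fun x => x ∈ Lset n n ∧ Module.finrank F2 ↥(x ⊓ y) = k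
  let NF : PV n → Finset (Submodule F2 (PV n)) :=
    fun v => univ.filter fun x =>
      (x ∈ Lset n n ∧ Module.finrank F2 ↥(x ⊓ y) = k) ∧ v ∈ x
  let yV : Finset (PV n) := univ.filter fun v => v ∈ y ∧ v ≠ 0
  -- Nat.card rewrites
  have hA : Nat.card {x : Submodule F2 (PV n) |
      x ∈ Lset n n ∧ Module.finrank F2 ↥(x ⊓ y) = k} = AF.card := by
    rw [Nat.card_coe_set_eq, Set.ncard_eq_toFinset_card', Set.toFinset_setOf]
  have hB : Nat.card {x : Submodule F2 (PV n) |
      x ∈ Lset n n ∧ w ≤ x ∧ Module.finrank F2 ↥(x ⊓ y) = k} = (NF w₀).card := by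
    have hBset : {x : Submodule F2 (PV n) |
        x ∈ Lset n n ∧ w ≤ x ∧ Module.finrank F2 ↥(x ⊓ y) = k} =
        {x : Submodule F2 (PV n) |
          (x ∈ Lset n n ∧ Module.finrank F2 ↥(x ⊓ y) = k) ∧ w₀ ∈ x} := by
      ext x
      simp only [Set.mem_setOf_eq, hspan x]
      tauto
    rw [hBset, Nat.card_coe_set_eq, Set.ncard_eq_toFinset_card', Set.toFinset_setOf]
  -- transitivity
  have htrans : ∀ v ∈ yV, (NF v).card = (NF w₀).card := by
    intro v hv
    simp only [yV, mem_filter, mem_univ, true_and] at hv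
    obtain ⟨e, hsymp, hY, he⟩ := exists_good_equiv hyiso hw₀y hv.1 hw₀ne hv.2
    have hc := card_filter_equiv (m := k) y e hsymp hY w₀
    rw [he] at hc
    exact hc.symm
  -- double counting
  have hcount1 : ∀ x ∈ AF, (yV.filter fun v => v ∈ x).card = 2 ^ k - 1 := by
    intro x hx
    simp only [AF, mem_filter, mem_univ, true_and] at hx
    have hfe : yV.filter (fun v => v ∈ x) =
        univ.filter fun v : PV n => v ∈ x ⊓ y ∧ v ≠ 0 := by
      ext v
      simp only [yV, Finset.filter_filter, mem_filter, mem_univ, true_and,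
        Submodule.mem_inf]
      tauto
    rw [hfe, card_nonzero (x ⊓ y), hx.2]
  have hyV : yV.card = 2 ^ n - 1 := by
    have hc := card_nonzero y
    rw [hyrank] at hc
    exact hc
  have hdouble : AF.card * (2 ^ k - 1) = (2 ^ n - 1) * (NF w₀).card := by
    calc AF.card * (2 ^ k - 1)
        = ∑ x ∈ AF, (yV.filter fun v => v ∈ x).card := by
          rw [Finset.sum_congr rfl hcount1, Finset.sum_const, smul_eq_mul]
      _ = ∑ x ∈ AF, ∑ v ∈ yV, if v ∈ x then 1 else 0 := by
          refine Finset.sum_congr rfl fun x _ => ?_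
          rw [Finset.card_filter]
      _ = ∑ v ∈ yV, ∑ x ∈ AF, if v ∈ x then 1 else 0 := Finset.sum_comm
      _ = ∑ v ∈ yV, (NF v).card := by
          refine Finset.sum_congr rfl fun v _ => ?_
          rw [← Finset.card_filter]
          congr 1
          ext x
          simp only [NF, AF, Finset.filter_filter, mem_filter, mem_univ, true_and]
      _ = ∑ v ∈ yV, (NF w₀).card := Finset.sum_congr rfl htrans
      _ = (2 ^ n - 1) * (NF w₀).card := by
          rw [Finset.sum_const, smul_eq_mul, hyV]
  -- arithmetic
  rw [ge_iff_le, hA, hB]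
  obtain ⟨b, hb⟩ : ∃ b, 2 ^ k = b + 2 :=
    ⟨2 ^ k - 2, by have := Nat.one_lt_two_pow_iff.mpr (by omega : k ≠ 0); omega⟩
  have hpow : 2 ^ n = (b + 2) * (b + 2) := by rw [← hkk, pow_add, hb]
  have hfact : 2 ^ n - 1 = (b + 1) * (b + 3) := by
    have h1 : (b + 2) * (b + 2) = (b + 1) * (b + 3) + 1 := by ring
    rw [hpow, h1, Nat.add_sub_cancel]
  have h2 : 2 ^ k - 1 = b + 1 := by omega
  rw [h2, hfact] at hdouble
  have hAB : AF.card = (b + 3) * (NF w₀).card := by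
    apply Nat.eq_of_mul_eq_mul_left (show 0 < b + 1 by omega)
    calc (b + 1) * AF.card = AF.card * (b + 1) := by ring
      _ = (b + 1) * (b + 3) * (NF w₀).card := hdouble
      _ = (b + 1) * ((b + 3) * (NF w₀).card) := by ring
  rw [hAB, hb]
  exact Nat.mul_le_mul_right _ (by omega)
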